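/- Let $M, \upzeta, \alpha, \epsilon, K, C > 0$ with $\upzeta < 1$, $\alpha \in (0,1/2)$ and $\epsilon < \alpha/K$. Suppose $F : \mathbb{D} \times (0,1] \to \mathbb{R}$ satisfies $|F(z,r) - F(w,s)| \leq M (\log(1/r))^{\upzeta} |(z,r)-(w,s)|^{\alpha} / s^{\alpha + \epsilon}$ whenever $1/2 < r/s < 2$. For $r \in (0,1)$ let $n(r)$ be the unique integer $n \geq 2$ with $r \in [n^{-K}, (n-1)^{-K})$, and suppose $(z,r) \mapsto (z', r')$ is an assignment with $|z - z'| \leq n(r)^{-(K+1)}$, $|r - r'| \leq C n(r)^{-(K+1)}$, and $r' \geq \tfrac{1}{2} n(r)^{-K}$. Then $\sup_{z \in \mathbb{D}} \left| \frac{F(z,r)}{\log(1/r)} - \frac{F(z', r')}{\log(1/r')} \right| \to 0$ as $r \to 0$. -/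

import Mathlib

open Metric Filter


lemma stmt13_tend (p q : ℝ) (hq : 0 < q) :
    Filter.Tendsto (fun r : ℝ => Real.log (1/r) ^ p * r ^ q)
      (nhdsWithin 0 (Set.Ioi 0)) (nhds 0) := by
  have h1 : Filter.Tendsto (fun r : ℝ => Real.log (1/r)) (nhdsWithin 0 (Set.Ioi 0)) Filter.atTop := by
    have h := Real.tendsto_log_nhdsGT_zero
    have h2 : Filter.Tendsto (fun r : ℝ => -Real.log r) (nhdsWithin 0 (Set.Ioi 0)) Filter.atTop :=
      Filter.tendsto_neg_atBot_atTop.comp h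
    refine h2.congr fun r => ?_
    rw [one_div, Real.log_inv]
  have h2 := tendsto_rpow_mul_exp_neg_mul_atTop_nhds_zero p q hq
  have h3 := h2.comp h1
  refine h3.congr' ?_
  filter_upwards [self_mem_nhdsWithin] with r hr
  have hr : (0:ℝ) < r := hr
  show Real.log (1/r) ^ p * Real.exp (-q * Real.log (1/r)) = Real.log (1/r) ^ p * r ^ q
  congr 1
  rw [Real.rpow_def_of_pos hr, one_div, Real.log_inv]
  congr 1
  ring

lemma stmt13_chain (M ζ α ε : ℝ) (hM : 0 < M) (hζ : 0 < ζ) (hα : 0 < α) (hε : 0 < ε)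
    (F : ℂ → ℝ → ℝ)
    (hHolder : ∀ z ∈ ball (0 : ℂ) 1, ∀ w ∈ ball (0 : ℂ) 1,
      ∀ r ∈ Set.Ioc (0 : ℝ) 1, ∀ s ∈ Set.Ioc (0 : ℝ) 1, 1 / 2 < r / s → r / s < 2 →
      |F z r - F w s| ≤ M * Real.log (1 / r) ^ ζ *
        Real.sqrt (‖z - w‖ ^ 2 + (r - s) ^ 2) ^ α / s ^ (α + ε)) :
    ∀ N : ℕ, ∀ s : ℝ, (2/3 : ℝ)^N ≤ s → s ≤ 1 → 0 < s → ∀ w ∈ ball (0:ℂ) 1,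
      |F w s - F 0 1| ≤ N * (M * Real.log (1/s) ^ ζ * s ^ (-ε)) := by
  intro N
  induction N with
  | zero =>
    intro s h0 h1 hpos w hw
    have hs1 : s = 1 := le_antisymm h1 (by simpa using h0)
    subst hs1
    have h := hHolder w hw 0 (mem_ball_self one_pos) 1 ⟨one_pos, le_refl 1⟩ 1
      ⟨one_pos, le_refl 1⟩ (by norm_num) (by norm_num)
    have : M * Real.log (1 / 1) ^ ζ *
        Real.sqrt (‖w - 0‖ ^ 2 + ((1:ℝ) - 1) ^ 2) ^ α / (1:ℝ) ^ (α + ε) = 0 := by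
      rw [one_div_one, Real.log_one, Real.zero_rpow hζ.ne']
      ring
    rw [this] at h
    simpa using h
  | succ N ih =>
    intro s h0 h1 hpos w hw
    have hLnn : 0 ≤ Real.log (1/s) := Real.log_nonneg (one_le_one_div hpos h1)
    have hXnn : 0 ≤ M * Real.log (1/s) ^ ζ * s ^ (-ε) :=
      mul_nonneg (mul_nonneg hM.le (Real.rpow_nonneg hLnn ζ)) (Real.rpow_nonneg hpos.le _)
    by_cases hc : (2/3:ℝ)^N ≤ s
    · calc |F w s - F 0 1| ≤ N * (M * Real.log (1/s) ^ ζ * s ^ (-ε)) := ih s hc h1 hpos w hw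
        _ ≤ (N+1 : ℕ) * (M * Real.log (1/s) ^ ζ * s ^ (-ε)) := by
            apply mul_le_mul_of_nonneg_right _ hXnn
            push_cast; linarith
    · push_neg at hc
      set s' := min ((3/2)*s) 1 with hs'def
      have hpowle1 : (2/3:ℝ)^N ≤ 1 := pow_le_one₀ (by norm_num) (by norm_num)
      have hslt1 : s < 1 := lt_of_lt_of_le hc hpowle1
      have hs'le1 : s' ≤ 1 := min_le_right _ _
      have hs'ge : (2/3:ℝ)^N ≤ s' := by
        apply le_min _ hpowle1
        have : (2/3:ℝ)^(N+1) = (2/3:ℝ)^N * (2/3) := pow_succ _ _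
        nlinarith [h0]
      have hslt : s < s' := lt_min (by linarith) hslt1
      have hs'le : s' ≤ (3/2)*s := min_le_left _ _
      have hs'pos : 0 < s' := lt_trans hpos hslt
      -- Hölder step between s and s'
      have hrat1 : 1/2 < s'/s := by
        have : 1 < s'/s := (one_lt_div hpos).mpr hslt
        linarith
      have hrat2 : s'/s < 2 := by
        rw [div_lt_iff₀ hpos]; linarith
      have hH := hHolder w hw w hw s' ⟨hs'pos, hs'le1⟩ s ⟨hpos, h1⟩ hrat1 hrat2
      have hsq : Real.sqrt (‖w - w‖ ^ 2 + (s' - s) ^ 2) = s' - s := by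
        rw [sub_self, norm_zero]
        rw [show (0:ℝ)^2 + (s'-s)^2 = (s'-s)^2 by ring]
        exact Real.sqrt_sq (by linarith)
      rw [hsq] at hH
      have hstep : |F w s' - F w s| ≤ M * Real.log (1/s) ^ ζ * s ^ (-ε) := by
        calc |F w s' - F w s| ≤ M * Real.log (1/s') ^ ζ * (s' - s) ^ α / s ^ (α + ε) := hH
          _ ≤ M * Real.log (1/s) ^ ζ * s ^ α / s ^ (α + ε) := by
              apply (div_le_div_iff_of_pos_right (Real.rpow_pos_of_pos hpos _)).mpr
              have hl1 : Real.log (1/s') ≤ Real.log (1/s) :=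
                Real.log_le_log (by positivity) (by rw [div_le_div_iff₀ hs'pos hpos]; nlinarith)
              have hl0 : 0 ≤ Real.log (1/s') := Real.log_nonneg (one_le_one_div hs'pos hs'le1)
              have h1' : Real.log (1/s') ^ ζ ≤ Real.log (1/s) ^ ζ :=
                Real.rpow_le_rpow hl0 hl1 hζ.le
              have h2' : (s' - s) ^ α ≤ s ^ α :=
                Real.rpow_le_rpow (by linarith) (by nlinarith) hα.le
              have hmm : Real.log (1/s') ^ ζ * (s' - s) ^ α ≤ Real.log (1/s) ^ ζ * s ^ α :=
                mul_le_mul h1' h2' (Real.rpow_nonneg (by linarith) _) (Real.rpow_nonneg hLnn _)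
              calc M * Real.log (1/s') ^ ζ * (s' - s) ^ α
                  = M * (Real.log (1/s') ^ ζ * (s' - s) ^ α) := by ring
                _ ≤ M * (Real.log (1/s) ^ ζ * s ^ α) := mul_le_mul_of_nonneg_left hmm hM.le
                _ = M * Real.log (1/s) ^ ζ * s ^ α := by ring
          _ = M * Real.log (1/s) ^ ζ * s ^ (-ε) := by
              rw [mul_div_assoc, ← Real.rpow_sub hpos]
              congr 2
              ring
      have hIH := ih s' hs'ge hs'le1 hs'pos w hw
      have hmono : N * (M * Real.log (1/s') ^ ζ * s' ^ (-ε)) ≤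
          N * (M * Real.log (1/s) ^ ζ * s ^ (-ε)) := by
        apply mul_le_mul_of_nonneg_left _ (Nat.cast_nonneg N)
        have hl1 : Real.log (1/s') ≤ Real.log (1/s) :=
          Real.log_le_log (by positivity) (by rw [div_le_div_iff₀ hs'pos hpos]; nlinarith)
        have hl0 : 0 ≤ Real.log (1/s') := Real.log_nonneg (one_le_one_div hs'pos hs'le1)
        have h1' : Real.log (1/s') ^ ζ ≤ Real.log (1/s) ^ ζ := Real.rpow_le_rpow hl0 hl1 hζ.le
        have h2' : s' ^ (-ε) ≤ s ^ (-ε) :=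
          Real.rpow_le_rpow_of_nonpos hpos hslt.le (by linarith)
        have hmm : Real.log (1/s') ^ ζ * s' ^ (-ε) ≤ Real.log (1/s) ^ ζ * s ^ (-ε) :=
          mul_le_mul h1' h2' (Real.rpow_nonneg hs'pos.le _) (Real.rpow_nonneg hLnn _)
        calc M * Real.log (1/s') ^ ζ * s' ^ (-ε)
            = M * (Real.log (1/s') ^ ζ * s' ^ (-ε)) := by ring
          _ ≤ M * (Real.log (1/s) ^ ζ * s ^ (-ε)) := mul_le_mul_of_nonneg_left hmm hM.le
          _ = M * Real.log (1/s) ^ ζ * s ^ (-ε) := by ring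
      calc |F w s - F 0 1| ≤ |F w s - F w s'| + |F w s' - F 0 1| := abs_sub_le _ _ _
        _ ≤ M * Real.log (1/s) ^ ζ * s ^ (-ε) + N * (M * Real.log (1/s) ^ ζ * s ^ (-ε)) := by
            rw [abs_sub_comm]
            exact add_le_add hstep (hIH.trans hmono)
        _ = (N+1 : ℕ) * (M * Real.log (1/s) ^ ζ * s ^ (-ε)) := by push_cast; ring

lemma stmt13_log32 : (1/3 : ℝ) ≤ Real.log (3/2) := by
  have h27 : Real.exp 1 ≤ 27/8 := le_trans Real.exp_one_lt_d9.le (by norm_num)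
  have h1 : (1:ℝ) ≤ Real.log (27/8) := (Real.le_log_iff_exp_le (by norm_num)).mpr h27
  have h2 : Real.log (27/8 : ℝ) = 3 * Real.log (3/2) := by
    rw [show (27/8:ℝ) = (3/2)^(3:ℕ) by norm_num, Real.log_pow]
    push_cast; ring
  linarith [h2 ▸ h1]

lemma stmt13_bound (M ζ α ε : ℝ) (hM : 0 < M) (hζ : 0 < ζ) (hα : 0 < α) (hε : 0 < ε)
    (F : ℂ → ℝ → ℝ)
    (hHolder : ∀ z ∈ ball (0 : ℂ) 1, ∀ w ∈ ball (0 : ℂ) 1,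
      ∀ r ∈ Set.Ioc (0 : ℝ) 1, ∀ s ∈ Set.Ioc (0 : ℝ) 1, 1 / 2 < r / s → r / s < 2 →
      |F z r - F w s| ≤ M * Real.log (1 / r) ^ ζ *
        Real.sqrt (‖z - w‖ ^ 2 + (r - s) ^ 2) ^ α / s ^ (α + ε)) :
    ∀ s : ℝ, 0 < s → s ≤ 1 → ∀ w ∈ ball (0:ℂ) 1,
      |F w s| ≤ |F 0 1| + (3 * Real.log (1/s) + 1) * (M * Real.log (1/s) ^ ζ * s ^ (-ε)) := by
  intro s hpos h1 w hw
  have hLnn : 0 ≤ Real.log (1/s) := Real.log_nonneg (one_le_one_div hpos h1)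
  have hlog32 := stmt13_log32
  have hlog32pos : (0:ℝ) < Real.log (3/2) := by linarith
  set N : ℕ := ⌈Real.log (1/s) / Real.log (3/2)⌉₊ with hN
  have hceil : Real.log (1/s) / Real.log (3/2) ≤ N := Nat.le_ceil _
  have hNle : (N : ℝ) ≤ 3 * Real.log (1/s) + 1 := by
    have h2 : (N:ℝ) < Real.log (1/s) / Real.log (3/2) + 1 :=
      Nat.ceil_lt_add_one (by positivity)
    have h3 : Real.log (1/s) / Real.log (3/2) ≤ 3 * Real.log (1/s) := by
      rw [div_le_iff₀ hlog32pos]; nlinarith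
    linarith
  have hpow : (2/3:ℝ)^N ≤ s := by
    have e1 : (2/3:ℝ)^N = Real.exp ((N:ℝ) * Real.log (2/3)) := by
      rw [Real.exp_nat_mul, Real.exp_log (by norm_num)]
    have e2 : Real.log (2/3 : ℝ) = -Real.log (3/2) := by
      rw [show (2/3:ℝ) = (3/2)⁻¹ by norm_num, Real.log_inv]
    have e3 : s = Real.exp (-Real.log (1/s)) := by
      rw [one_div, Real.log_inv, neg_neg, Real.exp_log hpos]
    rw [e1, e2, e3]
    apply Real.exp_le_exp.mpr
    have : Real.log (1/s) ≤ (N:ℝ) * Real.log (3/2) := by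
      calc Real.log (1/s) = (Real.log (1/s) / Real.log (3/2)) * Real.log (3/2) := by
            field_simp
        _ ≤ (N:ℝ) * Real.log (3/2) := mul_le_mul_of_nonneg_right hceil hlog32pos.le
    linarith
  have hchain := stmt13_chain M ζ α ε hM hζ hα hε F hHolder N s hpow h1 hpos w hw
  have hXnn : 0 ≤ M * Real.log (1/s) ^ ζ * s ^ (-ε) :=
    mul_nonneg (mul_nonneg hM.le (Real.rpow_nonneg hLnn ζ)) (Real.rpow_nonneg hpos.le _)
  calc |F w s| ≤ |F 0 1| + |F w s - F 0 1| := by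
        have := abs_sub_abs_le_abs_sub (F w s) (F 0 1)
        have h := abs_add_le (F 0 1) (F w s - F 0 1)
        simpa using h.trans_eq' (by ring_nf)
    _ ≤ |F 0 1| + (N:ℝ) * (M * Real.log (1/s) ^ ζ * s ^ (-ε)) := by linarith [hchain]
    _ ≤ |F 0 1| + (3 * Real.log (1/s) + 1) * (M * Real.log (1/s) ^ ζ * s ^ (-ε)) := by
        have := mul_le_mul_of_nonneg_right hNle hXnn
        linarith

set_option maxHeartbeats 2000000 in
/-- The Hölder-type modulus of continuity of the circle average process implies that
the normalized process at `(z, r)` and at its discretized companion `(z', r')` (nearest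
lattice point and discretized radius) have uniformly vanishing difference as `r → 0`. -/
theorem stmt13 (M ζ α ε K C : ℝ)
    (hM : 0 < M) (hζ : 0 < ζ) (hζ1 : ζ < 1) (hα : α ∈ Set.Ioo (0 : ℝ) (1 / 2))
    (hε : 0 < ε) (hK : 0 < K) (hC : 0 < C) (hεK : ε < α / K)
    (F : ℂ → ℝ → ℝ)
    (hHolder : ∀ z ∈ ball (0 : ℂ) 1, ∀ w ∈ ball (0 : ℂ) 1,
      ∀ r ∈ Set.Ioc (0 : ℝ) 1, ∀ s ∈ Set.Ioc (0 : ℝ) 1, 1 / 2 < r / s → r / s < 2 →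
      |F z r - F w s| ≤ M * Real.log (1 / r) ^ ζ *
        Real.sqrt (‖z - w‖ ^ 2 + (r - s) ^ 2) ^ α / s ^ (α + ε))
    (nr : ℝ → ℕ)
    (hnr : ∀ r ∈ Set.Ioo (0 : ℝ) 1, 2 ≤ nr r ∧
      ((nr r : ℝ)) ^ (-K) ≤ r ∧ r < ((nr r : ℝ) - 1) ^ (-K))
    (Z : ℂ → ℝ → ℂ) (R : ℂ → ℝ → ℝ)
    (hZmem : ∀ z ∈ ball (0 : ℂ) 1, ∀ r ∈ Set.Ioo (0 : ℝ) 1, Z z r ∈ ball (0 : ℂ) 1)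
    (hZclose : ∀ z ∈ ball (0 : ℂ) 1, ∀ r ∈ Set.Ioo (0 : ℝ) 1,
      ‖z - Z z r‖ ≤ ((nr r : ℝ)) ^ (-(K + 1)))
    (hRclose : ∀ z ∈ ball (0 : ℂ) 1, ∀ r ∈ Set.Ioo (0 : ℝ) 1,
      |r - R z r| ≤ C * ((nr r : ℝ)) ^ (-(K + 1)))
    (hRlow : ∀ z ∈ ball (0 : ℂ) 1, ∀ r ∈ Set.Ioo (0 : ℝ) 1,
      (1 / 2) * ((nr r : ℝ)) ^ (-K) ≤ R z r)
    (hRup : ∀ z ∈ ball (0 : ℂ) 1, ∀ r ∈ Set.Ioo (0 : ℝ) 1, R z r ≤ 1) :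
    ∀ δ > (0 : ℝ), ∃ r0 > (0 : ℝ), ∀ r ∈ Set.Ioo (0 : ℝ) r0, r < 1 →
      ∀ z ∈ ball (0 : ℂ) 1,
        |F z r / Real.log (1 / r) - F (Z z r) (R z r) / Real.log (1 / R z r)| ≤ δ := by
  obtain ⟨hα0, hα12⟩ := hα
  intro δ hδ
  have ha : 0 < α/K - ε := sub_pos.mpr hεK
  have hb : 0 < 1/K - ε := by
    have h1 : α/K ≤ 1/K := by gcongr; linarith
    linarith
  have t2 : Tendsto (fun r : ℝ => r ^ (1/K)) (nhdsWithin 0 (Set.Ioi 0)) (nhds 0) := by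
    have h := stmt13_tend 0 (1/K) (by positivity)
    refine h.congr fun r => ?_
    rw [Real.rpow_zero, one_mul]
  have tB : Tendsto (fun r : ℝ =>
      (M * Real.sqrt (1+C^2) ^ α * 2 ^ (α+ε)) * (Real.log (1/r) ^ ζ * r ^ (α/K - ε))
      + (2*C*|F 0 1|) * r ^ (1/K)
      + (2*C*(14 * 2 ^ ε * M)) * (Real.log (1/r) ^ (ζ+1) * r ^ (1/K - ε)))
      (nhdsWithin 0 (Set.Ioi 0)) (nhds 0) := by
    have t1 := (stmt13_tend ζ (α/K - ε) ha).const_mul (M * Real.sqrt (1+C^2) ^ α * 2 ^ (α+ε))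
    have t3 := t2.const_mul (2*C*|F 0 1|)
    have t4 := (stmt13_tend (ζ+1) (1/K - ε) hb).const_mul (2*C*(14 * 2 ^ ε * M))
    have h := (t1.add t3).add t4
    simpa using h
  have hev : ∀ᶠ r in nhdsWithin (0:ℝ) (Set.Ioi 0), r < 1/8 ∧ C * r ^ (1/K) < 1/2 ∧
      (M * Real.sqrt (1+C^2) ^ α * 2 ^ (α+ε)) * (Real.log (1/r) ^ ζ * r ^ (α/K - ε))
      + (2*C*|F 0 1|) * r ^ (1/K)
      + (2*C*(14 * 2 ^ ε * M)) * (Real.log (1/r) ^ (ζ+1) * r ^ (1/K - ε)) ≤ δ := by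
    refine Filter.Eventually.and ?_ (Filter.Eventually.and ?_ ?_)
    · exact (eventually_lt_nhds (by norm_num : (0:ℝ) < 1/8)).filter_mono nhdsWithin_le_nhds
    · have h := t2.const_mul C
      rw [mul_zero] at h
      exact h.eventually_lt_const (by norm_num)
    · exact tB.eventually_le_const hδ
  obtain ⟨r0, hr0, hsub⟩ := mem_nhdsGT_iff_exists_Ioo_subset.mp
    (Filter.eventually_iff.mp hev)
  refine ⟨r0, hr0, ?_⟩
  intro r hr hr1 z hz
  obtain ⟨h18, hCτ, hBδ⟩ := hsub hr
  have hrpos : (0:ℝ) < r := hr.1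
  have hrIoo : r ∈ Set.Ioo (0:ℝ) 1 := ⟨hrpos, hr1⟩
  have hτpos : (0:ℝ) < r ^ (1/K) := Real.rpow_pos_of_pos hrpos _
  obtain ⟨hn2, hnK, -⟩ := hnr r hrIoo
  have hn2' : (2:ℝ) ≤ (nr r : ℝ) := by exact_mod_cast hn2
  have hnpos : (0:ℝ) < (nr r : ℝ) := by linarith
  have hkey : ((nr r : ℝ)) ^ (-(K+1)) ≤ r * r ^ (1/K) := by
    have h1 : ((nr r : ℝ)) ^ (-(K+1)) = (((nr r : ℝ)) ^ (-K)) ^ ((K+1)/K) := by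
      rw [← Real.rpow_mul hnpos.le]
      congr 1
      field_simp
    have h2 : (((nr r : ℝ)) ^ (-K)) ^ ((K+1)/K) ≤ r ^ ((K+1)/K) :=
      Real.rpow_le_rpow (Real.rpow_nonneg hnpos.le _) hnK (by positivity)
    have h3 : r ^ ((K+1)/K) = r * r ^ (1/K) := by
      rw [show (K+1)/K = 1 + 1/K by field_simp, Real.rpow_add hrpos, Real.rpow_one]
    rw [h1, ← h3]
    exact h2
  have hzc : ‖z - Z z r‖ ≤ r * r ^ (1/K) := (hZclose z hz r hrIoo).trans hkey
  have hrc : |r - R z r| ≤ C * (r * r ^ (1/K)) :=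
    (hRclose z hz r hrIoo).trans (mul_le_mul_of_nonneg_left hkey hC.le)
  have hCrτ : C * (r * r ^ (1/K)) < r/2 := by
    have h := mul_lt_mul_of_pos_right hCτ hrpos
    nlinarith [h]
  have habs := abs_le.mp hrc
  have hr'gt : r/2 < R z r := by linarith [habs.2]
  have hr'lt : R z r < 2*r := by linarith [habs.1]
  have hr'pos : 0 < R z r := by linarith
  have hr'le1 : R z r ≤ 1 := hRup z hz r hrIoo
  have hrat1 : 1/2 < r / R z r := by rw [lt_div_iff₀ hr'pos]; linarith
  have hrat2 : r / R z r < 2 := by rw [div_lt_iff₀ hr'pos]; linarith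
  have hexp4 : Real.exp 1 ≤ 4 := by nlinarith [Real.exp_one_lt_d9]
  have hL1 : 1 ≤ Real.log (1/r) := by
    apply (Real.le_log_iff_exp_le (by positivity)).mpr
    rw [le_div_iff₀ hrpos]
    have h := mul_le_mul_of_nonneg_right hexp4 hrpos.le
    linarith
  have hL'1 : 1 ≤ Real.log (1/R z r) := by
    apply (Real.le_log_iff_exp_le (by positivity)).mpr
    rw [le_div_iff₀ hr'pos]
    have h := mul_le_mul_of_nonneg_right hexp4 hr'pos.le
    linarith
  have hLpos : (0:ℝ) < Real.log (1/r) := by linarith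
  have hL'pos : (0:ℝ) < Real.log (1/R z r) := by linarith
  have hL'le : Real.log (1/R z r) ≤ 2 * Real.log (1/r) := by
    have hd : 1/R z r ≤ 2 * (1/r) := by
      rw [show (2:ℝ) * (1/r) = 2/r by ring, div_le_div_iff₀ hr'pos hrpos]
      linarith
    calc Real.log (1/R z r) ≤ Real.log (2 * (1/r)) := Real.log_le_log (by positivity) hd
      _ = Real.log 2 + Real.log (1/r) := Real.log_mul (by norm_num) (by positivity)
      _ ≤ 2 * Real.log (1/r) := by
          have h2 := Real.log_le_sub_one_of_pos (show (0:ℝ) < 2 by norm_num)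
          linarith
  have hinv : |1/Real.log (1/r) - 1/Real.log (1/R z r)| ≤
      |Real.log (1/R z r) - Real.log (1/r)| := by
    have he : 1/Real.log (1/r) - 1/Real.log (1/R z r) =
        (Real.log (1/R z r) - Real.log (1/r)) /
          (Real.log (1/r) * Real.log (1/R z r)) := by
      field_simp
    rw [he, abs_div]
    have h1 : 1 ≤ |Real.log (1/r) * Real.log (1/R z r)| := by
      rw [abs_of_pos (by positivity)]
      nlinarith
    exact div_le_self (abs_nonneg _) h1
  have hdiff : |Real.log (1/R z r) - Real.log (1/r)| ≤ 2*C*r^(1/K) := by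
    have e1 : Real.log (1/R z r) - Real.log (1/r) = Real.log (r / R z r) := by
      rw [one_div, one_div, Real.log_inv, Real.log_inv, Real.log_div hrpos.ne' hr'pos.ne']
      ring
    have e2 : Real.log (1/r) - Real.log (1/R z r) = Real.log (R z r / r) := by
      rw [one_div, one_div, Real.log_inv, Real.log_inv, Real.log_div hr'pos.ne' hrpos.ne']
      ring
    rw [abs_sub_le_iff]
    constructor
    · rw [e1]
      have h := Real.log_le_sub_one_of_pos (show 0 < r / R z r by positivity)
      have h2 : r / R z r - 1 ≤ 2*C*r^(1/K) := by
        rw [div_sub_one hr'pos.ne', div_le_iff₀ hr'pos]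
        nlinarith [mul_lt_mul_of_pos_left hr'gt (show (0:ℝ) < 2*C*r^(1/K) by positivity),
          habs.2]
      linarith
    · rw [e2]
      have h := Real.log_le_sub_one_of_pos (show 0 < R z r / r by positivity)
      have h2 : R z r / r - 1 ≤ 2*C*r^(1/K) := by
        rw [div_sub_one hrpos.ne', div_le_iff₀ hrpos]
        nlinarith [habs.1, mul_pos (mul_pos hC hrpos) hτpos]
      linarith
  -- Term 1 : Hölder estimate
  have hH := hHolder z hz (Z z r) (hZmem z hz r hrIoo) r ⟨hrpos, le_of_lt hr1⟩ (R z r)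
    ⟨hr'pos, hr'le1⟩ hrat1 hrat2
  have hMLnn : 0 ≤ M * Real.log (1/r) ^ ζ :=
    mul_nonneg hM.le (Real.rpow_nonneg (by linarith) _)
  have hterm1 : |F z r - F (Z z r) (R z r)| ≤
      (M * Real.sqrt (1+C^2) ^ α * 2 ^ (α+ε)) * (Real.log (1/r) ^ ζ * r ^ (α/K - ε)) := by
    have hS : (0:ℝ) ≤ Real.sqrt (1+C^2) := Real.sqrt_nonneg _
    have hsq : Real.sqrt (‖z - Z z r‖^2 + (r - R z r)^2) ≤
        r * r^(1/K) * Real.sqrt (1+C^2) := by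
      calc Real.sqrt (‖z - Z z r‖^2 + (r - R z r)^2)
          ≤ Real.sqrt ((r*r^(1/K))^2 + (C*(r*r^(1/K)))^2) := by
            apply Real.sqrt_le_sqrt
            have h1 : ‖z - Z z r‖^2 ≤ (r*r^(1/K))^2 :=
              pow_le_pow_left₀ (norm_nonneg _) hzc 2
            have h2 : (r - R z r)^2 ≤ (C*(r*r^(1/K)))^2 := by
              rw [← sq_abs (r - R z r)]
              exact pow_le_pow_left₀ (abs_nonneg _) hrc 2
            linarith
        _ = r * r^(1/K) * Real.sqrt (1+C^2) := by
            rw [show (r*r^(1/K))^2 + (C*(r*r^(1/K)))^2 = (r*r^(1/K))^2 * (1+C^2) by ring,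
              Real.sqrt_mul (sq_nonneg _), Real.sqrt_sq (by positivity)]
    calc |F z r - F (Z z r) (R z r)|
        ≤ M * Real.log (1/r) ^ ζ *
            Real.sqrt (‖z - Z z r‖^2 + (r - R z r)^2) ^ α / (R z r) ^ (α+ε) := hH
      _ ≤ M * Real.log (1/r) ^ ζ * (r * r^(1/K) * Real.sqrt (1+C^2)) ^ α / (r/2) ^ (α+ε) := by
          apply div_le_div₀
            (mul_nonneg hMLnn (Real.rpow_nonneg (by positivity) _))
            (mul_le_mul_of_nonneg_left
              (Real.rpow_le_rpow (Real.sqrt_nonneg _) hsq hα0.le) hMLnn)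
            (Real.rpow_pos_of_pos (by positivity) _)
            (Real.rpow_le_rpow (by positivity) hr'gt.le (by positivity))
      _ = (M * Real.sqrt (1+C^2) ^ α * 2 ^ (α+ε)) *
            (Real.log (1/r) ^ ζ * r ^ (α/K - ε)) := by
          have e1 : (r * r^(1/K) * Real.sqrt (1+C^2))^α
              = r^α * r^(1/K*α) * Real.sqrt (1+C^2)^α := by
            rw [Real.mul_rpow (by positivity) hS, Real.mul_rpow hrpos.le (by positivity),
              ← Real.rpow_mul hrpos.le]
          have e3 : (r/2:ℝ)^(α+ε) = r^(α+ε)/2^(α+ε) :=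
            Real.div_rpow hrpos.le (by norm_num : (0:ℝ) ≤ 2) (α+ε)
          have e4 : r^α * r^(1/K*α) / r^(α+ε) = r^(α/K - ε) := by
            rw [← Real.rpow_add hrpos, ← Real.rpow_sub hrpos]
            congr 1
            field_simp
            ring
          rw [e1, e3]
          have h2pos : (0:ℝ) < (2:ℝ)^(α+ε) := Real.rpow_pos_of_pos (by norm_num) _
          have hrap : (0:ℝ) < r^(α+ε) := Real.rpow_pos_of_pos hrpos _
          calc M * Real.log (1/r) ^ ζ * (r^α * r^(1/K*α) * Real.sqrt (1+C^2)^α) /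
                (r^(α+ε)/2^(α+ε))
              = (M * Real.sqrt (1+C^2)^α * 2^(α+ε)) *
                  (Real.log (1/r) ^ ζ * (r^α * r^(1/K*α) / r^(α+ε))) := by
                field_simp
            _ = (M * Real.sqrt (1+C^2) ^ α * 2 ^ (α+ε)) *
                  (Real.log (1/r) ^ ζ * r ^ (α/K - ε)) := by rw [e4]
  -- Term 2 : chain bound and log difference
  have hchain := stmt13_bound M ζ α ε hM hζ hα0 hε F hHolder (R z r) hr'pos hr'le1
    (Z z r) (hZmem z hz r hrIoo)
  have hr'e : (R z r) ^ (-ε) ≤ 2^ε * r^(-ε) := by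
    have h1 : (r/2:ℝ) ^ (-ε) = 2^ε * r^(-ε) := by
      rw [Real.div_rpow hrpos.le (by norm_num : (0:ℝ) ≤ 2) (-ε),
        Real.rpow_neg (by norm_num : (0:ℝ) ≤ 2), div_eq_mul_inv, inv_inv]
      ring
    calc (R z r)^(-ε) ≤ (r/2)^(-ε) :=
          Real.rpow_le_rpow_of_nonpos (by positivity) hr'gt.le (by linarith)
      _ = 2^ε * r^(-ε) := h1
  have hLζnn : (0:ℝ) ≤ Real.log (1/r) ^ ζ := Real.rpow_nonneg (by linarith) _
  have hLζ' : Real.log (1/R z r) ^ ζ ≤ 2 * Real.log (1/r) ^ ζ := by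
    calc Real.log (1/R z r) ^ ζ ≤ (2 * Real.log (1/r)) ^ ζ :=
          Real.rpow_le_rpow (by linarith) hL'le hζ.le
      _ = 2^ζ * Real.log (1/r) ^ ζ := Real.mul_rpow (by norm_num) (by linarith)
      _ ≤ 2 * Real.log (1/r) ^ ζ := by
          have h2 : (2:ℝ)^ζ ≤ 2 := by
            calc (2:ℝ)^ζ ≤ (2:ℝ)^(1:ℝ) :=
                  Real.rpow_le_rpow_of_exponent_le one_le_two hζ1.le
              _ = 2 := Real.rpow_one 2
          exact mul_le_mul_of_nonneg_right h2 hLζnn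
  have hFb : |F (Z z r) (R z r)| ≤ |F 0 1| +
      (14 * 2 ^ ε * M) * (Real.log (1/r)^ζ * Real.log (1/r) * r^(-ε)) := by
    refine hchain.trans ?_
    have hL'ζnn : (0:ℝ) ≤ Real.log (1/R z r) ^ ζ := Real.rpow_nonneg (by linarith) _
    have p0 : 0 ≤ M * Real.log (1/R z r)^ζ * (R z r)^(-ε) :=
      mul_nonneg (mul_nonneg hM.le hL'ζnn) (Real.rpow_nonneg hr'pos.le _)
    have p1 : M * Real.log (1/R z r)^ζ * (R z r)^(-ε) ≤
        M * (2 * Real.log (1/r)^ζ) * (2^ε * r^(-ε)) := by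
      have hmm : Real.log (1/R z r)^ζ * (R z r)^(-ε) ≤
          (2 * Real.log (1/r)^ζ) * (2^ε * r^(-ε)) :=
        mul_le_mul hLζ' hr'e (Real.rpow_nonneg hr'pos.le _)
          (by positivity)
      calc M * Real.log (1/R z r)^ζ * (R z r)^(-ε)
          = M * (Real.log (1/R z r)^ζ * (R z r)^(-ε)) := by ring
        _ ≤ M * ((2 * Real.log (1/r)^ζ) * (2^ε * r^(-ε))) :=
            mul_le_mul_of_nonneg_left hmm hM.le
        _ = M * (2 * Real.log (1/r)^ζ) * (2^ε * r^(-ε)) := by ring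
    have p2 : 3 * Real.log (1/R z r) + 1 ≤ 7 * Real.log (1/r) := by linarith
    have p3 := mul_le_mul p2 p1 p0 (by linarith)
    have e : 7 * Real.log (1/r) * (M * (2 * Real.log (1/r)^ζ) * (2^ε * r^(-ε)))
        = (14 * 2 ^ ε * M) * (Real.log (1/r)^ζ * Real.log (1/r) * r^(-ε)) := by ring
    rw [e] at p3
    linarith
  have hterm2 : |F (Z z r) (R z r)| *
      |1/Real.log (1/r) - 1/Real.log (1/R z r)| ≤
      (2*C*|F 0 1|) * r^(1/K) +
      (2*C*(14 * 2 ^ ε * M)) * (Real.log (1/r)^(ζ+1) * r^(1/K - ε)) := by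
    have hrhsnn : 0 ≤ |F 0 1| +
        (14 * 2 ^ ε * M) * (Real.log (1/r)^ζ * Real.log (1/r) * r^(-ε)) := by
      have : (0:ℝ) ≤ (14 * 2 ^ ε * M) * (Real.log (1/r)^ζ * Real.log (1/r) * r^(-ε)) := by
        apply mul_nonneg (by positivity)
        exact mul_nonneg (mul_nonneg hLζnn (by linarith)) (Real.rpow_nonneg hrpos.le _)
      linarith [abs_nonneg (F 0 1)]
    have hq := mul_le_mul hFb (hinv.trans hdiff) (abs_nonneg _) hrhsnn
    have e2 : Real.log (1/r)^ζ * Real.log (1/r) = Real.log (1/r)^(ζ+1) := by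
      rw [Real.rpow_add hLpos, Real.rpow_one]
    have e3 : r^(-ε) * r^(1/K) = r^(1/K - ε) := by
      rw [← Real.rpow_add hrpos, show -ε + 1/K = 1/K - ε by ring]
    have e : (|F 0 1| + (14 * 2 ^ ε * M) * (Real.log (1/r)^ζ * Real.log (1/r) * r^(-ε)))
          * (2*C*r^(1/K))
        = (2*C*|F 0 1|) * r^(1/K) +
          (2*C*(14 * 2 ^ ε * M)) *
            ((Real.log (1/r)^ζ * Real.log (1/r)) * (r^(-ε) * r^(1/K))) := by ring
    rw [e, e2, e3] at hq
    exact hq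
  -- Assemble
  have hdecomp : F z r / Real.log (1/r) - F (Z z r) (R z r) / Real.log (1/R z r) =
      (F z r - F (Z z r) (R z r)) / Real.log (1/r)
      + F (Z z r) (R z r) * (1/Real.log (1/r) - 1/Real.log (1/R z r)) := by
    field_simp
    ring
  rw [hdecomp]
  calc |(F z r - F (Z z r) (R z r)) / Real.log (1/r)
        + F (Z z r) (R z r) * (1/Real.log (1/r) - 1/Real.log (1/R z r))|
      ≤ |(F z r - F (Z z r) (R z r)) / Real.log (1/r)|
        + |F (Z z r) (R z r) * (1/Real.log (1/r) - 1/Real.log (1/R z r))| := abs_add_le _ _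
    _ = |F z r - F (Z z r) (R z r)| / Real.log (1/r)
        + |F (Z z r) (R z r)| * |1/Real.log (1/r) - 1/Real.log (1/R z r)| := by
        rw [abs_div, abs_mul, abs_of_pos hLpos]
    _ ≤ |F z r - F (Z z r) (R z r)|
        + |F (Z z r) (R z r)| * |1/Real.log (1/r) - 1/Real.log (1/R z r)| := by
        have h := div_le_self (abs_nonneg (F z r - F (Z z r) (R z r))) hL1
        linarith
    _ ≤ (M * Real.sqrt (1+C^2) ^ α * 2 ^ (α+ε)) *
          (Real.log (1/r) ^ ζ * r ^ (α/K - ε))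
        + ((2*C*|F 0 1|) * r^(1/K) +
          (2*C*(14 * 2 ^ ε * M)) * (Real.log (1/r)^(ζ+1) * r^(1/K - ε))) :=
        add_le_add hterm1 hterm2
    _ ≤ δ := by linarith
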